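/- Among all trees on n ≥ 3 vertices, the Albertson index is at most (n-1)(n-2), with equality if and only if the tree is the star S_n. -/

import Mathlib

open scoped Classical

/-- Albertson irregularity index: sum over edges of |deg u - deg v|. -/
noncomputable def albertson {V : Type*} [Fintype V] (G : SimpleGraph V) : ℤ :=
  ∑ e ∈ G.edgeFinset,
    Sym2.lift ⟨fun u v => |(G.degree u : ℤ) - (G.degree v : ℤ)|,
      fun u v => by simp [abs_sub_comm]⟩ e

/-- Sigma index: sum over edges of (deg u - deg v)^2. -/
noncomputable def sigmaIdx {V : Type*} [Fintype V] (G : SimpleGraph V) : ℤ :=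
  ∑ e ∈ G.edgeFinset,
    Sym2.lift ⟨fun u v => ((G.degree u : ℤ) - (G.degree v : ℤ))^2,
      fun u v => by ring⟩ e

/-- The star graph on `n` vertices: vertex 0 is the center, adjacent to all others. -/
def starGraph (n : ℕ) : SimpleGraph (Fin n) :=
  SimpleGraph.fromRel (fun u _ => u.val = 0)

/-- Caterpillar C(n,m): spine path x_1,...,x_n, each spine vertex with m pendant leaves. -/
def caterpillar (n m : ℕ) : SimpleGraph (Fin n ⊕ Fin n × Fin m) :=
  SimpleGraph.fromRel (fun a b =>
    match a, b with
    | Sum.inl i, Sum.inl j => (i : ℕ) + 1 = (j : ℕ)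
    | Sum.inl i, Sum.inr p => i = p.1
    | _, _ => False)

section Aux
variable {n : ℕ}

private lemma star_degrees (c : Fin n) (T : SimpleGraph (Fin n))
    (hadj : ∀ u v, T.Adj u v ↔ u ≠ v ∧ (u = c ∨ v = c)) :
    T.degree c = n - 1 ∧ ∀ v, v ≠ c → T.degree v = 1 := by
  constructor
  · have h : T.neighborFinset c = Finset.univ.erase c := by
      ext w
      simp [SimpleGraph.mem_neighborFinset, hadj, eq_comm, and_comm]
    rw [SimpleGraph.degree, h, Finset.card_erase_of_mem (Finset.mem_univ c)]
    simp
  · intro v hv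
    have h : T.neighborFinset v = {c} := by
      ext w
      simp only [SimpleGraph.mem_neighborFinset, hadj, Finset.mem_singleton]
      constructor
      · rintro ⟨h1, h2 | h2⟩
        · exact absurd h2 hv
        · exact h2
      · rintro rfl; exact ⟨hv, Or.inr rfl⟩
    rw [SimpleGraph.degree, h, Finset.card_singleton]

private lemma star_albertson (hn : 3 ≤ n) (c : Fin n) (T : SimpleGraph (Fin n)) (hT : T.IsTree)
    (hadj : ∀ u v, T.Adj u v ↔ u ≠ v ∧ (u = c ∨ v = c)) :
    albertson T = ((n : ℤ) - 1) * ((n : ℤ) - 2) := by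
  obtain ⟨hdc, hdv⟩ := star_degrees c T hadj
  have hcard : T.edgeFinset.card + 1 = n := by
    simpa using hT.card_edgeFinset
  have hterm : ∀ e ∈ T.edgeFinset,
      Sym2.lift ⟨fun u v => |(T.degree u : ℤ) - (T.degree v : ℤ)|,
        fun u v => by simp [abs_sub_comm]⟩ e = (n : ℤ) - 2 := by
    intro e he
    induction e using Sym2.ind with
    | _ u v =>
      rw [SimpleGraph.mem_edgeFinset, SimpleGraph.mem_edgeSet] at he
      rw [hadj] at he
      have hc1 : ((n - 1 : ℕ) : ℤ) = (n : ℤ) - 1 := by omega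
      obtain ⟨huv, rfl | rfl⟩ := he
      · have h2 := hdv v (Ne.symm huv)
        show |((T.degree u : ℤ)) - (T.degree v : ℤ)| = (n : ℤ) - 2
        rw [hdc, h2, hc1, Nat.cast_one, abs_of_nonneg (by omega)]
        omega
      · have h2 := hdv u huv
        show |((T.degree u : ℤ)) - (T.degree v : ℤ)| = (n : ℤ) - 2
        rw [hdc, h2, hc1, Nat.cast_one, abs_of_nonpos (by omega)]
        omega
  rw [albertson, Finset.sum_congr rfl hterm, Finset.sum_const, nsmul_eq_mul]
  have : (T.edgeFinset.card : ℤ) = (n : ℤ) - 1 := by omega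
  rw [this]

private lemma star_iso (hn : 3 ≤ n) (c : Fin n) (T : SimpleGraph (Fin n))
    (hadj : ∀ u v, T.Adj u v ↔ u ≠ v ∧ (u = c ∨ v = c)) :
    Nonempty (T ≃g starGraph n) := by
  have : NeZero n := ⟨by omega⟩
  refine ⟨⟨Equiv.swap c 0, ?_⟩⟩
  intro u v
  have hswap : ∀ w : Fin n, ((Equiv.swap c 0 w : Fin n) : ℕ) = 0 ↔ w = c := by
    intro w
    have hz : Equiv.swap c 0 w = 0 ↔ w = c := by
      constructor
      · intro h
        have := congrArg (Equiv.swap c 0) h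
        rwa [Equiv.swap_apply_self, Equiv.swap_apply_right] at this
      · rintro rfl; exact Equiv.swap_apply_left _ 0
    rw [← hz]
    constructor
    · intro h; exact Fin.ext (by simpa using h)
    · rintro h; simp [h]
  simp only [starGraph, SimpleGraph.fromRel_adj, hadj, hswap,
    ne_eq, EmbeddingLike.apply_eq_iff_eq]

private lemma term_le (hn : 3 ≤ n) (T : SimpleGraph (Fin n)) :
    ∀ e ∈ T.edgeFinset,
      Sym2.lift ⟨fun u v => |(T.degree u : ℤ) - (T.degree v : ℤ)|,
        fun u v => by simp [abs_sub_comm]⟩ e ≤ (n : ℤ) - 2 := by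
  intro e he
  induction e using Sym2.ind with
  | _ u v =>
    rw [SimpleGraph.mem_edgeFinset, SimpleGraph.mem_edgeSet] at he
    have h1 : 0 < T.degree u := T.degree_pos_iff_exists_adj u |>.mpr ⟨v, he⟩
    have h2 : 0 < T.degree v := T.degree_pos_iff_exists_adj v |>.mpr ⟨u, he.symm⟩
    have h3 : T.degree u < n := by simpa using T.degree_lt_card_verts u
    have h4 : T.degree v < n := by simpa using T.degree_lt_card_verts v
    show |((T.degree u : ℤ)) - (T.degree v : ℤ)| ≤ (n : ℤ) - 2
    rw [abs_le]
    constructor <;> omega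

end Aux

theorem stmt9 (n : ℕ) (hn : 3 ≤ n) (T : SimpleGraph (Fin n)) (hT : T.IsTree) :
    albertson T ≤ ((n : ℤ) - 1) * ((n : ℤ) - 2) ∧
      (albertson T = ((n : ℤ) - 1) * ((n : ℤ) - 2) ↔ Nonempty (T ≃g starGraph n)) := by
  have hcard : T.edgeFinset.card + 1 = n := by simpa using hT.card_edgeFinset
  have hbound := term_le hn T
  have hconst : ∑ _e ∈ T.edgeFinset, ((n : ℤ) - 2) = ((n : ℤ) - 1) * ((n : ℤ) - 2) := by
    rw [Finset.sum_const, nsmul_eq_mul]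
    have : (T.edgeFinset.card : ℤ) = (n : ℤ) - 1 := by omega
    rw [this]
  refine ⟨hconst ▸ Finset.sum_le_sum hbound, ?_, ?_⟩
  · -- equality → star
    intro heq
    have hpt : ∀ e ∈ T.edgeFinset,
        Sym2.lift ⟨fun u v => |(T.degree u : ℤ) - (T.degree v : ℤ)|,
          fun u v => by simp [abs_sub_comm]⟩ e = (n : ℤ) - 2 :=
      (Finset.sum_eq_sum_iff_of_le hbound).mp (heq.trans hconst.symm)
    -- find a vertex of degree n-1
    obtain ⟨e, he⟩ : T.edgeFinset.Nonempty := by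
      rw [← Finset.card_pos]; omega
    have hc : ∃ c : Fin n, T.degree c = n - 1 := by
      induction e using Sym2.ind with
      | _ a b =>
        have hmem := he
        rw [SimpleGraph.mem_edgeFinset, SimpleGraph.mem_edgeSet] at hmem
        have h1 : 0 < T.degree a := T.degree_pos_iff_exists_adj a |>.mpr ⟨b, hmem⟩
        have h2 : 0 < T.degree b := T.degree_pos_iff_exists_adj b |>.mpr ⟨a, hmem.symm⟩
        have h3 : T.degree a < n := by simpa using T.degree_lt_card_verts a
        have h4 : T.degree b < n := by simpa using T.degree_lt_card_verts b
        have h5 : |((T.degree a : ℤ)) - (T.degree b : ℤ)| = (n : ℤ) - 2 := hpt _ he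
        rcases abs_cases ((T.degree a : ℤ) - (T.degree b : ℤ)) with ⟨ha, _⟩ | ⟨ha, _⟩
        · exact ⟨a, by omega⟩
        · exact ⟨b, by omega⟩
    obtain ⟨c, hdegc⟩ := hc
    -- c is adjacent to everything else
    have hnb : T.neighborFinset c = Finset.univ.erase c := by
      apply Finset.eq_of_subset_of_card_le
      · intro w hw
        rw [SimpleGraph.mem_neighborFinset] at hw
        exact Finset.mem_erase.mpr ⟨hw.ne', Finset.mem_univ w⟩
      · rw [Finset.card_erase_of_mem (Finset.mem_univ c), Finset.card_univ, Fintype.card_fin]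
        rw [← SimpleGraph.degree, hdegc]
    have hadjc : ∀ v, v ≠ c → T.Adj c v := by
      intro v hv
      rw [← SimpleGraph.mem_neighborFinset, hnb]
      exact Finset.mem_erase.mpr ⟨hv, Finset.mem_univ v⟩
    -- every other vertex has degree 1
    have hdeg1 : ∀ v, v ≠ c → T.degree v = 1 := by
      intro v hv
      have hadj := hadjc v hv
      have hmem : s(c, v) ∈ T.edgeFinset := by
        rw [SimpleGraph.mem_edgeFinset, SimpleGraph.mem_edgeSet]; exact hadj
      have h5 : |((T.degree c : ℤ)) - (T.degree v : ℤ)| = (n : ℤ) - 2 := hpt _ hmem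
      have h1 : 0 < T.degree v := T.degree_pos_iff_exists_adj v |>.mpr ⟨c, hadj.symm⟩
      have h4 : T.degree v < n := by simpa using T.degree_lt_card_verts v
      rcases abs_cases ((T.degree c : ℤ) - (T.degree v : ℤ)) with ⟨ha, _⟩ | ⟨ha, _⟩ <;> omega
    -- full characterization
    have hadj : ∀ u v, T.Adj u v ↔ u ≠ v ∧ (u = c ∨ v = c) := by
      intro u v
      constructor
      · intro h
        refine ⟨h.ne, ?_⟩
        by_contra hcon
        push_neg at hcon
        obtain ⟨hu, hv⟩ := hcon
        have hsub : ({c, u} : Finset (Fin n)) ⊆ T.neighborFinset v := by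
          intro w hw
          rw [Finset.mem_insert, Finset.mem_singleton] at hw
          rw [SimpleGraph.mem_neighborFinset]
          rcases hw with rfl | rfl
          · exact (hadjc v hv).symm
          · exact h.symm
        have : ({c, u} : Finset (Fin n)).card ≤ T.degree v :=
          Finset.card_le_card hsub
        rw [Finset.card_insert_of_notMem (by simpa using (Ne.symm hu)),
          Finset.card_singleton, hdeg1 v hv] at this
        omega
      · rintro ⟨huv, rfl | rfl⟩
        · exact hadjc v (Ne.symm huv)
        · exact (hadjc u huv).symm
    exact star_iso hn c T hadj
  · -- star → equality
    rintro ⟨f⟩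
    have : NeZero n := ⟨by omega⟩
    set c := f.symm 0 with hc
    have hadj : ∀ u v, T.Adj u v ↔ u ≠ v ∧ (u = c ∨ v = c) := by
      intro u v
      rw [← f.map_rel_iff]
      have hz : ∀ w : Fin n, (f w : ℕ) = 0 ↔ w = c := by
        intro w
        constructor
        · intro h
          have : f w = 0 := Fin.ext (by simpa using h)
          rw [hc, ← this, RelIso.symm_apply_apply]
        · rintro rfl
          rw [hc, RelIso.apply_symm_apply]
          simp
      show (starGraph n).Adj (f u) (f v) ↔ _
      simp only [starGraph, SimpleGraph.fromRel_adj]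
      simp only [hz, ne_eq, EmbeddingLike.apply_eq_iff_eq]
      exact Iff.and (not_congr f.injective.eq_iff) (Iff.or (hz u) (hz v))
    exact star_albertson hn c T hT hadj
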